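/- Let ħ > 0 and let χ₀ : ℝ^{2n} → ℂ be continuously differentiable. Define χ(t,ξ) = χ₀(R_t^T ξ) · exp(−(1/(2ħ)) ξ·D_t ξ). Then χ(0,ξ) = χ₀(ξ) for all ξ, and χ satisfies the partial differential equation ∂_t χ(t,ξ) = (A^T ξ)·∇_ξ χ(t,ξ) − (1/(2ħ)) (ξ·Mξ) χ(t,ξ) for all t ∈ ℝ and ξ ∈ ℝ^{2n}. -/

import Mathlib

open Matrix MeasureTheory intervalIntegral

section Aux

lemma expEntry_hasDerivAt {ι : Type*} [Fintype ι] [DecidableEq ι]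
    (A : Matrix ι ι ℝ) (t : ℝ) (i j : ι) :
    HasDerivAt (fun s : ℝ => NormedSpace.exp (s • A) i j)
      ((A * NormedSpace.exp (t • A)) i j) t := by
  letI : SeminormedRing (Matrix ι ι ℝ) := Matrix.linftyOpSemiNormedRing
  letI : NormedRing (Matrix ι ι ℝ) := Matrix.linftyOpNormedRing
  letI : NormedAlgebra ℝ (Matrix ι ι ℝ) := Matrix.linftyOpNormedAlgebra
  have h := hasDerivAt_exp_smul_const' (𝕂 := ℝ) A t
  let L : Matrix ι ι ℝ →ₗ[ℝ] ℝ :=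
    { toFun := fun X => X i j, map_add' := fun _ _ => rfl, map_smul' := fun _ _ => rfl }
  have hL : Continuous L := LinearMap.continuous_of_finiteDimensional L
  let Lc : Matrix ι ι ℝ →L[ℝ] ℝ := { toLinearMap := L, cont := hL }
  exact Lc.hasFDerivAt.comp_hasDerivAt t h

lemma mulVec_transpose_hasDerivAt {ι : Type*} [Fintype ι] [DecidableEq ι]
    {F : ℝ → Matrix ι ι ℝ} {F' : Matrix ι ι ℝ} {t : ℝ}
    (h : ∀ i j, HasDerivAt (fun s => F s i j) (F' i j) t) (ξ : ι → ℝ) :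
    HasDerivAt (fun s => (F s)ᵀ.mulVec ξ) (F'ᵀ.mulVec ξ) t := by
  rw [hasDerivAt_pi]
  intro i
  simp only [Matrix.mulVec, dotProduct, Matrix.transpose_apply]
  exact HasDerivAt.fun_sum fun j _ => (h j i).mul_const (ξ j)

lemma entry_mul_hasDerivAt {ι κ σ : Type*} [Fintype κ]
    {F : ℝ → Matrix ι κ ℝ} {G : ℝ → Matrix κ σ ℝ} {F' : Matrix ι κ ℝ} {G' : Matrix κ σ ℝ}
    {t : ℝ}
    (hF : ∀ i j, HasDerivAt (fun s => F s i j) (F' i j) t)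
    (hG : ∀ i j, HasDerivAt (fun s => G s i j) (G' i j) t)
    (i : ι) (j : σ) :
    HasDerivAt (fun s => (F s * G s) i j) ((F' * G t + F t * G') i j) t := by
  simp only [Matrix.mul_apply, Matrix.add_apply, ← Finset.sum_add_distrib]
  exact HasDerivAt.fun_sum fun k _ => (hF i k).fun_mul (hG k j)

noncomputable def quadCLM {ι : Type*} [Fintype ι] (D : Matrix ι ι ℝ) (ξ : ι → ℝ) :
    (ι → ℝ) →L[ℝ] ℝ :=
  LinearMap.toContinuousLinearMap
    { toFun := fun v => v ⬝ᵥ D.mulVec ξ + ξ ⬝ᵥ D.mulVec v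
      map_add' := by intro a b; simp [add_dotProduct, Matrix.mulVec_add,
        dotProduct_add]; ring
      map_smul' := by intro c a; simp [smul_dotProduct, Matrix.mulVec_smul,
        dotProduct_smul]; ring }

@[simp] lemma quadCLM_apply {ι : Type*} [Fintype ι] (D : Matrix ι ι ℝ) (ξ v : ι → ℝ) :
    quadCLM D ξ v = v ⬝ᵥ D.mulVec ξ + ξ ⬝ᵥ D.mulVec v := rfl

lemma quad_hasFDerivAt {ι : Type*} [Fintype ι] [DecidableEq ι] (D : Matrix ι ι ℝ) (ξ : ι → ℝ) :
    HasFDerivAt (fun x : ι → ℝ => x ⬝ᵥ D.mulVec x) (quadCLM D ξ) ξ := by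
  have h : ∀ i : ι, HasFDerivAt (fun x : ι → ℝ => x i * (D.mulVec x) i)
      (ξ i • ((ContinuousLinearMap.proj i).comp
          (LinearMap.toContinuousLinearMap (Matrix.mulVecLin D)))
        + (D.mulVec ξ) i • (ContinuousLinearMap.proj (R := ℝ) (φ := fun _ : ι => ℝ) i)) ξ := by
    intro i
    exact ((ContinuousLinearMap.proj (R := ℝ) (φ := fun _ : ι => ℝ) i).hasFDerivAt (x := ξ)).mul
      (((ContinuousLinearMap.proj i).comp
        (LinearMap.toContinuousLinearMap (Matrix.mulVecLin D))).hasFDerivAt)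
  have hs := HasFDerivAt.fun_sum (u := (Finset.univ : Finset ι)) (fun i _ => h i)
  refine hs.congr_fderiv (Eq.symm ?_)
  ext v
  simp [dotProduct, Matrix.mulVec, ContinuousLinearMap.sum_apply, Finset.sum_add_distrib]
  rw [add_comm]
  congr 1
  simp [mul_comm]

end Aux

/-- with `χ(t,ξ) = χ₀(R_tᵀ ξ) exp(-(1/(2hbar)) ξ·D_t ξ)` one has
`χ(0,·) = χ₀` and `∂_t χ(t,ξ) = (Aᵀξ)·∇_ξ χ(t,ξ) - (1/(2hbar)) (ξ·Mξ) χ(t,ξ)`. -/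
theorem characteristic_function_evolution (n : ℕ) (hn : 1 ≤ n)
    (A M : Matrix (Fin (2 * n)) (Fin (2 * n)) ℝ) (hM : M.IsSymm)
    (R : ℝ → Matrix (Fin (2 * n)) (Fin (2 * n)) ℝ)
    (hR : ∀ t, R t = NormedSpace.exp (t • A))
    (D : ℝ → Matrix (Fin (2 * n)) (Fin (2 * n)) ℝ)
    (hD : ∀ t, D t = Matrix.of fun i j => ∫ s in (0:ℝ)..t, (R s * M * (R s)ᵀ) i j)
    (hbar : ℝ) (hhbar : 0 < hbar)
    (χ₀ : (Fin (2 * n) → ℝ) → ℂ) (hχ₀ : ContDiff ℝ 1 χ₀)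
    (χ : ℝ → (Fin (2 * n) → ℝ) → ℂ)
    (hχ : ∀ t ξ, χ t ξ =
      χ₀ ((R t)ᵀ.mulVec ξ) * Complex.exp (-(1 / (2 * hbar) : ℝ) * (ξ ⬝ᵥ (D t).mulVec ξ))) :
    (∀ ξ, χ 0 ξ = χ₀ ξ) ∧
      ∀ t ξ, HasDerivAt (fun τ => χ τ ξ)
        (fderiv ℝ (χ t) ξ (Aᵀ.mulVec ξ)
          - (1 / (2 * hbar) : ℝ) * ((ξ ⬝ᵥ M.mulVec ξ : ℝ) : ℂ) * χ t ξ) t := by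
  have hι : True := trivial
  -- basic facts about R
  have hRd : ∀ (t : ℝ) (i j : Fin (2*n)), HasDerivAt (fun s => R s i j) ((A * R t) i j) t := by
    intro t i j
    have he : (fun s : ℝ => R s i j) = fun s => NormedSpace.exp (s • A) i j := by
      funext s; rw [hR]
    rw [he, hR]
    exact expEntry_hasDerivAt A t i j
  have hR0 : R 0 = 1 := by rw [hR]; simp [NormedSpace.exp_zero]
  have hRcont : ∀ (i j : Fin (2*n)), Continuous fun s => R s i j := fun i j =>
    continuous_iff_continuousAt.2 fun t => (hRd t i j).continuousAt
  -- the integrand g s = R s * M * (R s)ᵀ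
  set g : ℝ → Matrix (Fin (2*n)) (Fin (2*n)) ℝ := fun s => R s * M * (R s)ᵀ with hg
  have hgcont : ∀ (i j : Fin (2*n)), Continuous fun s => g s i j := by
    intro i j
    have : Continuous fun s => g s := by
      apply Continuous.matrix_mul
      · exact Continuous.matrix_mul (continuous_matrix hRcont) continuous_const
      · exact Continuous.matrix_transpose (continuous_matrix hRcont)
    exact (continuous_apply j).comp ((continuous_apply i).comp this)
  have hg0 : g 0 = M := by simp [hg, hR0]
  have hDg : ∀ t, D t = Matrix.of fun i j => ∫ s in (0:ℝ)..t, g s i j := hD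
  -- derivative of entries of g
  have hgd : ∀ (s : ℝ) (i j : Fin (2*n)),
      HasDerivAt (fun u => g u i j) ((A * g s + g s * Aᵀ) i j) s := by
    intro s i j
    have h1 : ∀ (i j : Fin (2*n)), HasDerivAt (fun u => (R u * M) i j) ((A * R s * M) i j) s := by
      intro i j
      have := entry_mul_hasDerivAt (F := R) (G := fun _ => M) (F' := A * R s) (G' := 0)
        (hRd s) (fun i j => hasDerivAt_const s (M i j)) i j
      simpa using this
    have h2 : ∀ (i j : Fin (2*n)), HasDerivAt (fun u => (R u)ᵀ i j) ((A * R s)ᵀ i j) s := fun i j =>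
      hRd s j i
    have := entry_mul_hasDerivAt (F := fun u => R u * M) (G := fun u => (R u)ᵀ)
      (F' := A * R s * M) (G' := (A * R s)ᵀ) h1 h2 i j
    have heq : A * R s * M * (R s)ᵀ + R s * M * (A * R s)ᵀ = A * g s + g s * Aᵀ := by
      simp only [hg, Matrix.transpose_mul, Matrix.mul_assoc]
    rwa [heq] at this
  -- derivative of entries of D
  have hDd : ∀ (t : ℝ) (i j : Fin (2*n)), HasDerivAt (fun u => D u i j) (g t i j) t := by
    intro t i j
    have he : (fun u => D u i j) = fun u => ∫ s in (0:ℝ)..u, g s i j := by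
      funext u; rw [hDg]; rfl
    rw [he]
    exact intervalIntegral.integral_hasDerivAt_right
      ((hgcont i j).intervalIntegrable _ _)
      (hgcont i j).aestronglyMeasurable.stronglyMeasurableAtFilter (hgcont i j).continuousAt
  -- symmetry of g and D
  have hgsymm : ∀ s, (g s)ᵀ = g s := by
    intro s
    simp only [hg, Matrix.transpose_mul, Matrix.transpose_transpose, hM.eq, Matrix.mul_assoc]
  have hDsymm : ∀ t, (D t)ᵀ = D t := by
    intro t
    ext i j
    rw [hDg]
    simp only [Matrix.transpose_apply, Matrix.of_apply]
    congr 1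
    funext s
    exact congrFun (congrFun (hgsymm s) i) j
  -- key identity : A * D t + D t * Aᵀ = g t - M
  have hkey : ∀ t, A * D t + D t * Aᵀ = g t - M := by
    intro t
    ext i j
    have hint : ∀ (k l : Fin (2*n)), IntervalIntegrable (fun s => g s k l) volume 0 t :=
      fun k l => (hgcont k l).intervalIntegrable _ _
    have hc1 : Continuous fun s => ∑ k, A i k * g s k j :=
      continuous_finset_sum _ fun k _ => continuous_const.mul (hgcont k j)
    have hc2 : Continuous fun s => ∑ k, g s i k * A j k :=
      continuous_finset_sum _ fun k _ => (hgcont i k).mul continuous_const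
    have lhs_eq : ∫ s in (0:ℝ)..t, (A * g s + g s * Aᵀ) i j
        = (A * D t + D t * Aᵀ) i j := by
      have h1 : ∀ s : ℝ, (A * g s + g s * Aᵀ) i j
          = (∑ k, A i k * g s k j) + ∑ k, g s i k * A j k := by
        intro s
        simp [Matrix.add_apply, Matrix.mul_apply, Matrix.transpose_apply]
      simp_rw [h1]
      rw [intervalIntegral.integral_add (hc1.intervalIntegrable _ _) (hc2.intervalIntegrable _ _),
        intervalIntegral.integral_finset_sum
          (fun k _ => (continuous_const.fun_mul (hgcont k j)).intervalIntegrable _ _),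
        intervalIntegral.integral_finset_sum
          (fun k _ => ((hgcont i k).fun_mul continuous_const).intervalIntegrable _ _)]
      simp_rw [intervalIntegral.integral_const_mul, intervalIntegral.integral_mul_const]
      simp [Matrix.add_apply, Matrix.mul_apply, hDg, Matrix.of_apply, Matrix.transpose_apply]
    rw [← lhs_eq]
    have : ∫ s in (0:ℝ)..t, (A * g s + g s * Aᵀ) i j = g t i j - g 0 i j := by
      apply intervalIntegral.integral_eq_sub_of_hasDerivAt
      · intro s _
        exact hgd s i j
      · apply Continuous.intervalIntegrable
        have h1 : Continuous fun s => (A * g s) i j := by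
          simp only [Matrix.mul_apply]
          exact continuous_finset_sum _ fun k _ => (continuous_const.mul (hgcont k j))
        have h2 : Continuous fun s => (g s * Aᵀ) i j := by
          simp only [Matrix.mul_apply]
          exact continuous_finset_sum _ fun k _ => ((hgcont i k).mul continuous_const)
        simpa [Matrix.add_apply] using h1.fun_add h2
    rw [this, hg0]
    simp
  have hD0 : D 0 = 0 := by
    ext i j; rw [hDg]; simp
  have hχ₀d : Differentiable ℝ χ₀ := hχ₀.differentiable one_ne_zero
  constructor
  · intro ξ
    rw [hχ, hR0, hD0]
    simp
  · intro t ξ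
    -- notation
    have hu : True := trivial
    -- ξ-derivative of χ t
    have h1 : HasFDerivAt (fun x => χ₀ ((R t)ᵀ.mulVec x))
        ((fderiv ℝ χ₀ ((R t)ᵀ.mulVec ξ)).comp
          (LinearMap.toContinuousLinearMap (Matrix.mulVecLin (R t)ᵀ))) ξ :=
      HasFDerivAt.comp ξ ((hχ₀d ((R t)ᵀ.mulVec ξ)).hasFDerivAt)
        ((LinearMap.toContinuousLinearMap (Matrix.mulVecLin (R t)ᵀ)).hasFDerivAt)
    have h2 : HasFDerivAt (fun x : Fin (2*n) → ℝ => x ⬝ᵥ (D t).mulVec x)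
        (quadCLM (D t) ξ) ξ := quad_hasFDerivAt (D t) ξ
    have h2c : HasFDerivAt (fun x : Fin (2*n) → ℝ => ((x ⬝ᵥ (D t).mulVec x : ℝ) : ℂ))
        (Complex.ofRealCLM.comp (quadCLM (D t) ξ)) ξ :=
      Complex.ofRealCLM.hasFDerivAt.comp ξ h2
    have h3 := h2c.const_mul (-((1 / (2 * hbar) : ℝ) : ℂ))
    have h4 := h3.cexp
    have h5 := h1.mul h4
    have hχt : χ t = fun x => χ₀ ((R t)ᵀ.mulVec x) *
        Complex.exp (-((1 / (2 * hbar) : ℝ) : ℂ) * ((x ⬝ᵥ (D t).mulVec x : ℝ) : ℂ)) :=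
      funext fun x => hχ t x
    have hfder : fderiv ℝ (χ t) ξ = (χ₀ ((R t)ᵀ.mulVec ξ) •
          (Complex.exp (-((1 / (2 * hbar) : ℝ) : ℂ) * ((ξ ⬝ᵥ (D t).mulVec ξ : ℝ) : ℂ)) •
            ((-((1 / (2 * hbar) : ℝ) : ℂ)) • (Complex.ofRealCLM.comp (quadCLM (D t) ξ))))
        + Complex.exp (-((1 / (2 * hbar) : ℝ) : ℂ) * ((ξ ⬝ᵥ (D t).mulVec ξ : ℝ) : ℂ)) •
          ((fderiv ℝ χ₀ ((R t)ᵀ.mulVec ξ)).comp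
            (LinearMap.toContinuousLinearMap (Matrix.mulVecLin (R t)ᵀ)))) := by
      rw [hχt]
      exact h5.fderiv
    -- time derivative
    have ht1 : HasDerivAt (fun τ => (R τ)ᵀ.mulVec ξ) ((A * R t)ᵀ.mulVec ξ) t :=
      mulVec_transpose_hasDerivAt (fun i j => hRd t i j) ξ
    have ht2 : HasDerivAt (fun τ => χ₀ ((R τ)ᵀ.mulVec ξ))
        ((fderiv ℝ χ₀ ((R t)ᵀ.mulVec ξ)) ((A * R t)ᵀ.mulVec ξ)) t :=
      ((hχ₀d ((R t)ᵀ.mulVec ξ)).hasFDerivAt).comp_hasDerivAt t ht1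
    have ht3 : HasDerivAt (fun τ => ξ ⬝ᵥ (D τ).mulVec ξ) (ξ ⬝ᵥ (g t).mulVec ξ) t := by
      simp only [dotProduct, Matrix.mulVec]
      exact HasDerivAt.fun_sum fun i _ =>
        ((HasDerivAt.fun_sum fun j _ => (hDd t i j).mul_const (ξ j)).const_mul (ξ i))
    have ht4 : HasDerivAt (fun τ => ((ξ ⬝ᵥ (D τ).mulVec ξ : ℝ) : ℂ))
        ((ξ ⬝ᵥ (g t).mulVec ξ : ℝ) : ℂ) t :=
      Complex.ofRealCLM.hasFDerivAt.comp_hasDerivAt t ht3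
    have ht5 := (ht4.const_mul (-((1 / (2 * hbar) : ℝ) : ℂ))).cexp
    have ht6 := ht2.mul ht5
    have hfun : (fun τ => χ τ ξ) = fun τ => χ₀ ((R τ)ᵀ.mulVec ξ) *
        Complex.exp (-((1 / (2 * hbar) : ℝ) : ℂ) * ((ξ ⬝ᵥ (D τ).mulVec ξ : ℝ) : ℂ)) :=
      funext fun τ => hχ τ ξ
    rw [hfun, hχ t ξ, hfder]
    refine ht6.congr_deriv (Eq.symm ?_)
    -- now a scalar identity
    have hvec : (A * R t)ᵀ.mulVec ξ = (R t)ᵀ.mulVec (Aᵀ.mulVec ξ) := by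
      rw [Matrix.transpose_mul, ← Matrix.mulVec_mulVec]
    have e1 : (Aᵀ.mulVec ξ) ⬝ᵥ (D t).mulVec ξ = ξ ⬝ᵥ ((A * D t).mulVec ξ) := by
      rw [Matrix.mulVec_transpose, Matrix.dotProduct_mulVec, Matrix.dotProduct_mulVec,
        Matrix.vecMul_vecMul]
    have e2 : ξ ⬝ᵥ (D t).mulVec (Aᵀ.mulVec ξ) = ξ ⬝ᵥ ((D t * Aᵀ).mulVec ξ) := by
      rw [Matrix.mulVec_mulVec]
    have hsum : A * D t + D t * Aᵀ + M = g t := by rw [hkey]; exact sub_add_cancel _ _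
    have hscal : (Aᵀ.mulVec ξ) ⬝ᵥ (D t).mulVec ξ + ξ ⬝ᵥ (D t).mulVec (Aᵀ.mulVec ξ)
        + ξ ⬝ᵥ M.mulVec ξ = ξ ⬝ᵥ (g t).mulVec ξ := by
      rw [e1, e2, ← hsum]
      simp [Matrix.add_mulVec, dotProduct_add]
    simp only [ContinuousLinearMap.add_apply, ContinuousLinearMap.smul_apply,
      ContinuousLinearMap.comp_apply, quadCLM_apply, Complex.ofRealCLM_apply,
      smul_eq_mul, LinearMap.coe_toContinuousLinearMap', Matrix.mulVecLin_apply,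
      Pi.smul_apply]
    rw [hvec] at *
    rw [← hscal]
    push_cast
    ring
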